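/- Let T be a tree on at least 5 vertices with maximum degree at most 3. Then there exists a vertex u of T such that deleting u from T leaves at most one component of order greater than 3, and at least one component of order 2 or 3. -/

import Mathlib

open SimpleGraph

/-- A diagonal (chord) of a convex `n`-gon with vertices `0, …, n-1` in cyclic order,
recorded as a pair `(i, j)` with `i < j`, joining two non-adjacent vertices. -/
def IsDiag (n : ℕ) (p : ℕ × ℕ) : Prop :=
  p.1 < p.2 ∧ p.2 < n ∧ 2 ≤ p.2 - p.1 ∧ p.2 - p.1 ≤ n - 2

/-- Two diagonals of a convex polygon cross (in their interiors). -/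
def Crosses (p q : ℕ × ℕ) : Prop :=
  (p.1 < q.1 ∧ q.1 < p.2 ∧ p.2 < q.2) ∨ (q.1 < p.1 ∧ p.1 < q.2 ∧ q.2 < p.2)

/-- A triangulation of a convex `n`-gon: `n - 3` pairwise non-crossing diagonals.
This is the standard combinatorial presentation of a maximal outerplanar graph on
`n` vertices (the polygon boundary is the outer Hamiltonian cycle). -/
structure PolyTriangulation (n : ℕ) where
  diags : Finset (ℕ × ℕ)
  isDiag : ∀ p ∈ diags, IsDiag n p
  noncross : ∀ p ∈ diags, ∀ q ∈ diags, ¬ Crosses p q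
  card_eq : diags.card = n - 3

/-- The maximal outerplanar graph on `Fin n` given by a polygon triangulation:
the boundary Hamiltonian cycle `v_i v_{i+1}` together with the diagonals. -/
def PolyTriangulation.graph {n : ℕ} (T : PolyTriangulation n) : SimpleGraph (Fin n) :=
  SimpleGraph.fromRel (fun i j =>
    (i.val + 1) % n = j.val ∨ (min i.val j.val, max i.val j.val) ∈ T.diags)

/-- `S` is a total dominating set of `G`: every vertex has a neighbor in `S`. -/
def IsTotalDom {V : Type*} (G : SimpleGraph V) (S : Set V) : Prop :=
  ∀ v, ∃ u ∈ S, G.Adj v u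

/-- `G` has two disjoint total dominating sets (total domatic number at least 2). -/
def HasTwoTDS {V : Type*} (G : SimpleGraph V) : Prop :=
  ∃ S₁ S₂ : Set V, Disjoint S₁ S₂ ∧ IsTotalDom G S₁ ∧ IsTotalDom G S₂

/-- The degree of a vertex in the maximal outerplanar graph of a triangulation. -/
noncomputable def pdeg {n : ℕ} (T : PolyTriangulation n) (v : Fin n) : ℕ :=
  (T.graph.neighborSet v).ncard

/-- A central vertex: no degree-2 vertex in its closed neighborhood, and indexing the
vertices cyclically starting from `v`, all neighbors of `v` have pairwise congruent
indices mod 4. -/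
def IsCentral {n : ℕ} (T : PolyTriangulation n) (v : Fin n) : Prop :=
  (∀ u, (u = v ∨ T.graph.Adj v u) → pdeg T u ≠ 2) ∧
  (∀ u w, T.graph.Adj v u → T.graph.Adj v w →
    ((u.val + n - v.val) % n) % 4 = ((w.val + n - v.val) % n) % 4)

/-- A generalized sun graph: a maximal outerplanar graph of order `n ≡ 2 (mod 4)`
in which the number of degree-2 vertices plus central vertices equals `n / 2`. -/
def IsGenSun {n : ℕ} (T : PolyTriangulation n) : Prop :=
  n % 4 = 2 ∧
  ({v : Fin n | pdeg T v = 2}.ncard + {v : Fin n | IsCentral T v}.ncard = n / 2)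


section TreeAux

variable {V : Type*} {G : SimpleGraph V}

lemma aux_path_length_eq_dist (ht : G.IsTree) {a b : V} (p : G.Walk a b) (hp : p.IsPath) :
    p.length = G.dist a b := by
  obtain ⟨q, hq, hl⟩ := ht.isConnected.exists_path_of_dist a b
  rw [(ht.existsUnique_path a b).unique hp hq, hl]

lemma aux_dist_split (ht : G.IsTree) {a b u : V} (p : G.Walk a b) (hp : p.IsPath)
    (hu : u ∈ p.support) : G.dist a b = G.dist a u + G.dist u b := by
  classical
  rw [← aux_path_length_eq_dist ht p hp, ← p.take_spec hu, SimpleGraph.Walk.length_append,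
    aux_path_length_eq_dist ht _ (hp.takeUntil hu), aux_path_length_eq_dist ht _ (hp.dropUntil hu)]

lemma aux_mem_support_of_dist (ht : G.IsTree) {a b u : V}
    (h : G.dist a b = G.dist a u + G.dist u b) (p : G.Walk a b) (hp : p.IsPath) :
    u ∈ p.support := by
  obtain ⟨q1, hq1, hl1⟩ := ht.isConnected.exists_path_of_dist a u
  obtain ⟨q2, hq2, hl2⟩ := ht.isConnected.exists_path_of_dist u b
  have hW : (q1.append q2).length = G.dist a b := by
    rw [SimpleGraph.Walk.length_append, hl1, hl2, h]
  have hWp : (q1.append q2).IsPath := SimpleGraph.Walk.isPath_of_length_eq_dist _ hW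
  rw [(ht.existsUnique_path a b).unique hp hWp, SimpleGraph.Walk.mem_support_append_iff]
  exact Or.inl q1.end_mem_support

lemma aux_below_adj (ht : G.IsTree) {r u b b' : V}
    (hb : G.dist r b = G.dist r u + G.dist u b) (hbu : b ≠ u) (hb'u : b' ≠ u)
    (hadj : G.Adj b b') : G.dist r b' = G.dist r u + G.dist u b' := by
  classical
  obtain ⟨Q, hQ, hQl⟩ := ht.isConnected.exists_path_of_dist r b
  have huQ : u ∈ Q.support := aux_mem_support_of_dist ht hb Q hQ
  by_cases hm : b' ∈ Q.support
  · by_cases hu1 : u ∈ (Q.takeUntil b' hm).support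
    · exact aux_dist_split ht _ (hQ.takeUntil hm) hu1
    · exfalso
      have hu2 : u ∈ (Q.dropUntil b' hm).support := by
        have h' := huQ
        rw [← Q.take_spec hm, SimpleGraph.Walk.mem_support_append_iff] at h'
        exact h'.resolve_left hu1
      have hsplit : G.dist b' b = G.dist b' u + G.dist u b :=
        aux_dist_split ht _ (hQ.dropUntil hm) hu2
      have h1 : G.dist b' b = 1 := SimpleGraph.dist_eq_one_iff_adj.2 hadj.symm
      have h2 : G.dist b' u ≠ 0 := fun h0 => hb'u (ht.isConnected.dist_eq_zero_iff.1 h0)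
      have h3 : G.dist u b ≠ 0 := fun h0 => hbu (ht.isConnected.dist_eq_zero_iff.1 h0).symm
      omega
  · have hQ' : (Q.concat hadj).IsPath := by
      rw [SimpleGraph.Walk.isPath_def, SimpleGraph.Walk.support_concat,
        List.nodup_append]
      refine ⟨hQ.support_nodup, List.nodup_singleton _, ?_⟩
      intro v hv w hv' hvw
      rw [List.mem_singleton] at hv'
      rw [hvw, hv'] at hv
      exact hm hv
    have hu' : u ∈ (Q.concat hadj).support := by
      rw [SimpleGraph.Walk.support_concat]
      exact List.mem_append.2 (Or.inl huQ)
    exact aux_dist_split ht _ hQ' hu'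

lemma aux_below_walk (ht : G.IsTree) {r u : V} {a b : V} (q : G.Walk a b) :
    (∀ v ∈ q.support, v ≠ u) → G.dist r a = G.dist r u + G.dist u a →
    G.dist r b = G.dist r u + G.dist u b := by
  induction q with
  | nil => exact fun _ h => h
  | cons hadj p ih =>
    intro hs h
    refine ih (fun v hv => hs v (by simp [SimpleGraph.Walk.support_cons, hv])) ?_
    exact aux_below_adj ht h (hs _ (by simp [SimpleGraph.Walk.support_cons]))
      (hs _ (by simp [SimpleGraph.Walk.support_cons, p.start_mem_support])) hadj

lemma aux_reachable_induce {s : Set V} {a b : V} (p : G.Walk a b) :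
    (∀ v ∈ p.support, v ∈ s) → ∀ (ha : a ∈ s) (hb : b ∈ s),
    (G.induce s).Reachable ⟨a, ha⟩ ⟨b, hb⟩ := by
  induction p with
  | nil => exact fun _ ha hb => SimpleGraph.Reachable.refl _
  | @cons a c b hadj p ih =>
    intro hp ha hb
    have hc : c ∈ s := hp c (by simp [SimpleGraph.Walk.support_cons, p.start_mem_support])
    have h1 : (G.induce s).Adj ⟨a, ha⟩ ⟨c, hc⟩ := by
      simp only [SimpleGraph.comap_adj, Function.Embedding.coe_subtype]; exact hadj
    exact h1.reachable.trans
      (ih (fun v hv => hp v (by simp [SimpleGraph.Walk.support_cons, hv])) hc hb)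

lemma aux_walk_out {s : Set V} {a b : ↥s} (p : (G.induce s).Walk a b) :
    ∃ q : G.Walk a.1 b.1, ∀ v ∈ q.support, v ∈ s := by
  induction p with
  | nil =>
    refine ⟨SimpleGraph.Walk.nil, ?_⟩
    intro v hv
    rw [SimpleGraph.Walk.support_nil, List.mem_singleton] at hv
    exact hv ▸ Subtype.mem _
  | @cons a c b h p ih =>
    obtain ⟨q, hq⟩ := ih
    have ha : G.Adj a.1 c.1 := h
    refine ⟨SimpleGraph.Walk.cons ha q, ?_⟩
    intro v hv
    rw [SimpleGraph.Walk.support_cons, List.mem_cons] at hv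
    rcases hv with rfl | hv
    · exact a.2
    · exact hq v hv

end TreeAux

/-- if `T` is a tree on at least 5 vertices with maximum degree ≤ 3,
then there is a vertex `u` such that `T - u` has at most one component of order > 3
and at least one component of order 2 or 3. -/
theorem stmt6 {V : Type*} [Fintype V] (G : SimpleGraph V) (ht : G.IsTree)
    (hcard : 5 ≤ Fintype.card V)
    (hdeg : ∀ v : V, (G.neighborSet v).ncard ≤ 3) :
    ∃ u : V,
      {c : (G.induce {v : V | v ≠ u}).ConnectedComponent | 3 < c.supp.ncard}.ncard ≤ 1 ∧
      ∃ c : (G.induce {v : V | v ≠ u}).ConnectedComponent,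
        c.supp.ncard = 2 ∨ c.supp.ncard = 3 := by
  classical
  have hconn := ht.isConnected
  haveI : Nonempty V := hconn.nonempty
  obtain ⟨r⟩ := (inferInstance : Nonempty V)
  obtain ⟨x, hx⟩ := Finite.exists_max (fun v => G.dist r v)
  have hx' : ∀ v, G.dist r v ≤ G.dist r x := hx
  clear hx
  have hx := hx'
  set D := G.dist r x with hD
  have hD2 : 2 ≤ D := by
    by_contra hlt
    push_neg at hlt
    have hadj : ∀ v, v ≠ r → G.Adj r v := by
      intro v hv
      have h1 : G.dist r v ≤ D := hx v
      have h0 : G.dist r v ≠ 0 :=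
        SimpleGraph.dist_ne_zero_iff_ne_and_reachable.2 ⟨Ne.symm hv, hconn.preconnected r v⟩
      exact SimpleGraph.dist_eq_one_iff_adj.1 (by omega)
    have hsub : ({r}ᶜ : Set V) ⊆ G.neighborSet r := fun v hv => hadj v hv
    have h1 : ({r}ᶜ : Set V).ncard ≤ 3 :=
      le_trans (Set.ncard_le_ncard hsub (Set.toFinite _)) (hdeg r)
    have h2 : ({r}ᶜ : Set V).ncard + 1 = Fintype.card V := by
      have : insert r ({r}ᶜ : Set V) = Set.univ := by
        ext v; by_cases hv : v = r <;> simp [hv]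
      have h3 := Set.ncard_insert_of_notMem
        (fun h => h rfl : r ∉ ({r}ᶜ : Set V)) (Set.toFinite _)
      rw [this, Set.ncard_univ, Nat.card_eq_fintype_card] at h3
      omega
    omega
  obtain ⟨P, hP, hPl⟩ := hconn.exists_path_of_dist r x
  have hxr : x ≠ r := by
    intro h
    rw [hD, h, SimpleGraph.dist_self] at hD2
    omega
  obtain ⟨w, hxw, q, hq⟩ := SimpleGraph.Walk.exists_eq_cons_of_ne hxr P.reverse
  have hqp : q.IsPath := by
    have h' := hP.reverse
    rw [hq] at h'
    exact h'.of_cons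
  have hqlen : q.length = D - 1 := by
    have h' : P.reverse.length = D := by rw [SimpleGraph.Walk.length_reverse, hPl]
    rw [hq, SimpleGraph.Walk.length_cons] at h'
    omega
  have hdrw : G.dist r w = D - 1 := by
    rw [SimpleGraph.dist_comm, ← aux_path_length_eq_dist ht q hqp, hqlen]
  have hwr : w ≠ r := by
    intro h
    rw [h, SimpleGraph.dist_self] at hdrw
    omega
  obtain ⟨u, hwu, Q, hQe⟩ := SimpleGraph.Walk.exists_eq_cons_of_ne hwr q
  have hQp : Q.IsPath := by
    have h' := hqp
    rw [hQe] at h'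
    exact h'.of_cons
  have hdru : G.dist r u = D - 2 := by
    have h' : Q.length = D - 2 := by
      have := hqlen
      rw [hQe, SimpleGraph.Walk.length_cons] at this
      omega
    rw [SimpleGraph.dist_comm, ← aux_path_length_eq_dist ht Q hQp, h']
  have hux2 : G.dist u x = 2 := by
    have hle : G.dist u x ≤ 2 := by
      have := SimpleGraph.dist_le
        (SimpleGraph.Walk.cons hwu.symm (SimpleGraph.Walk.cons hxw.symm SimpleGraph.Walk.nil))
      simpa using this
    have htri : D ≤ G.dist r u + G.dist u x := by
      rw [hD]
      exact hconn.dist_triangle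
    omega
  have hduw : G.dist u w = 1 := SimpleGraph.dist_eq_one_iff_adj.2 hwu.symm
  have hbelw : G.dist r w = G.dist r u + G.dist u w := by rw [hdrw, hdru, hduw]; omega
  have hbelx : G.dist r x = G.dist r u + G.dist u x := by rw [← hD, hdru, hux2]; omega
  have hwne : w ≠ u := hwu.ne
  have hxne : x ≠ u := by
    intro h
    rw [h, SimpleGraph.dist_self] at hux2
    omega
  set S : Set V := {v : V | v ≠ u} with hS
  -- uniqueness of the neighbor of u in a component
  have huniq1 : ∀ (c : (G.induce S).ConnectedComponent) (a1 a2 : ↥S),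
      a1 ∈ c.supp → a2 ∈ c.supp → G.Adj u a1.1 → G.Adj u a2.1 → a1 = a2 := by
    intro c a1 a2 h1 h2 had1 had2
    by_contra hne
    rw [SimpleGraph.ConnectedComponent.mem_supp_iff] at h1 h2
    have hreach : (G.induce S).Reachable a1 a2 :=
      SimpleGraph.ConnectedComponent.eq.1 (h1.trans h2.symm)
    obtain ⟨p⟩ := hreach
    obtain ⟨qout, hqout⟩ := aux_walk_out p
    have hbp := qout.bypass_isPath
    have hval : a1.1 ≠ a2.1 := fun h => hne (Subtype.ext h)
    have hpath2 : (SimpleGraph.Walk.cons had1.symm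
        (SimpleGraph.Walk.cons had2 SimpleGraph.Walk.nil) : G.Walk a1.1 a2.1).IsPath := by
      rw [SimpleGraph.Walk.isPath_def]
      simp [had1.ne', had2.ne, hval]
    have hEq := (ht.existsUnique_path a1.1 a2.1).unique hpath2 hbp
    have hu_mem : u ∈ qout.bypass.support := by
      rw [← hEq]
      simp [SimpleGraph.Walk.support_cons]
    exact (hqout u (qout.support_bypass_subset hu_mem)) rfl
  have hmid : ∀ b : V, G.dist u b = 2 → ∃ av : V, G.Adj u av ∧ G.Adj av b := by
    intro b hb
    obtain ⟨p, hp, hpl⟩ := hconn.exists_path_of_dist u b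
    rw [hb] at hpl
    refine ⟨p.getVert 1, ?_, ?_⟩
    · have h' := p.adj_getVert_succ (by omega : 0 < p.length)
      rwa [p.getVert_zero] at h'
    · have h' := p.adj_getVert_succ (by omega : 1 < p.length)
      have h2 : p.getVert 2 = b := by
        have := p.getVert_length
        rwa [hpl] at this
      rwa [h2] at h'
  -- small components
  have hsmall : ∀ (c : (G.induce S).ConnectedComponent) (b0 : ↥S), b0 ∈ c.supp →
      G.dist r b0.1 = G.dist r u + G.dist u b0.1 → c.supp.ncard ≤ 3 := by
    intro c b0 hb0 hbel0
    have hall : ∀ b ∈ c.supp, G.dist r b.1 = G.dist r u + G.dist u b.1 := by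
      intro b hb
      rw [SimpleGraph.ConnectedComponent.mem_supp_iff] at hb
      have hreach : (G.induce S).Reachable b0 b := by
        rw [SimpleGraph.ConnectedComponent.mem_supp_iff] at hb0
        exact SimpleGraph.ConnectedComponent.eq.1 (hb0.trans hb.symm)
      obtain ⟨p⟩ := hreach
      obtain ⟨qq, hqq⟩ := aux_walk_out p
      exact aux_below_walk ht qq (fun v hv => hqq v hv) hbel0
    have hdepth : ∀ b ∈ c.supp, G.dist u b.1 = 1 ∨ G.dist u b.1 = 2 := by
      intro b hb
      have h1 := hall b hb
      have h2 : G.dist r b.1 ≤ D := hx b.1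
      have h0 : G.dist u b.1 ≠ 0 := fun h0 => b.2 (hconn.dist_eq_zero_iff.1 h0).symm
      omega
    obtain ⟨a, hac, hau⟩ : ∃ a : ↥S, a ∈ c.supp ∧ G.Adj u a.1 := by
      rcases hdepth b0 hb0 with h1 | h2
      · exact ⟨b0, hb0, SimpleGraph.dist_eq_one_iff_adj.1 h1⟩
      · obtain ⟨av, hav1, hav2⟩ := hmid b0.1 h2
        have havS : av ∈ S := hav1.ne'
        have havadj : (G.induce S).Adj ⟨av, havS⟩ b0 := by
          simp only [SimpleGraph.comap_adj, Function.Embedding.coe_subtype]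
          exact hav2
        have hmem : (⟨av, havS⟩ : ↥S) ∈ c.supp := by
          rw [SimpleGraph.ConnectedComponent.mem_supp_iff] at hb0 ⊢
          rw [← hb0]
          exact SimpleGraph.ConnectedComponent.sound havadj.reachable
        exact ⟨⟨av, havS⟩, hmem, hav1⟩
    have himg : Subtype.val '' c.supp ⊆ insert a.1 (G.neighborSet a.1 \ {u}) := by
      rintro v ⟨b, hb, rfl⟩
      rcases hdepth b hb with h1 | h2
      · have hba : b = a := huniq1 c b a hb hac (SimpleGraph.dist_eq_one_iff_adj.1 h1) hau
        rw [hba]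
        exact Set.mem_insert _ _
      · obtain ⟨av, hav1, hav2⟩ := hmid b.1 h2
        have havS : av ∈ S := hav1.ne'
        have havadj : (G.induce S).Adj ⟨av, havS⟩ b := by
          simp only [SimpleGraph.comap_adj, Function.Embedding.coe_subtype]
          exact hav2
        have havc : (⟨av, havS⟩ : ↥S) ∈ c.supp := by
          rw [SimpleGraph.ConnectedComponent.mem_supp_iff] at hb ⊢
          rw [← hb]
          exact SimpleGraph.ConnectedComponent.sound havadj.reachable
        have hav_eq : (⟨av, havS⟩ : ↥S) = a := huniq1 c _ a havc hac hav1 hau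
        have hval : av = a.1 := congrArg Subtype.val hav_eq
        refine Set.mem_insert_of_mem _ ⟨?_, ?_⟩
        · rw [SimpleGraph.mem_neighborSet, ← hval]
          exact hav2
        · exact b.2
    calc c.supp.ncard = (Subtype.val '' c.supp).ncard :=
          (Set.ncard_image_of_injective _ Subtype.val_injective).symm
      _ ≤ (insert a.1 (G.neighborSet a.1 \ {u})).ncard :=
          Set.ncard_le_ncard himg (Set.toFinite _)
      _ ≤ (G.neighborSet a.1 \ {u}).ncard + 1 := Set.ncard_insert_le _ _
      _ ≤ 3 := by
          have h1 : u ∈ G.neighborSet a.1 := hau.symm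
          have h2 : (G.neighborSet a.1 \ {u}) ⊂ G.neighborSet a.1 :=
            Set.sdiff_singleton_ssubset.2 h1
          have h3 := Set.ncard_lt_ncard h2 (Set.toFinite _)
          have h4 := hdeg a.1
          omega
  refine ⟨u, ?_, ?_⟩
  · -- at most one big component
    have hss : {c : (G.induce S).ConnectedComponent | 3 < c.supp.ncard}.Subsingleton := by
      intro c1 h1 c2 h2
      simp only [Set.mem_setOf_eq] at h1 h2
      have hget : ∀ c : (G.induce S).ConnectedComponent, 3 < c.supp.ncard →
          ∃ b ∈ c.supp, ¬(G.dist r b.1 = G.dist r u + G.dist u b.1) := by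
        intro c hc
        by_contra hno
        push_neg at hno
        obtain ⟨b0, hb0⟩ := c.exists_rep
        have hb0m : b0 ∈ c.supp := by
          rw [SimpleGraph.ConnectedComponent.mem_supp_iff]; exact hb0
        have := hsmall c b0 hb0m (hno b0 hb0m)
        omega
      obtain ⟨b1, hb1s, hb1⟩ := hget c1 h1
      obtain ⟨b2, hb2s, hb2⟩ := hget c2 h2
      have hru : r ≠ u := by
        intro h
        apply hb1
        rw [← h, SimpleGraph.dist_self]
        omega
      have hruS : r ∈ S := hru
      have hreach : ∀ (b : ↥S), ¬(G.dist r b.1 = G.dist r u + G.dist u b.1) →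
          (G.induce S).Reachable ⟨r, hruS⟩ b := by
        intro b hnb
        obtain ⟨p, hp, hpl⟩ := hconn.exists_path_of_dist r b.1
        have hu_not : u ∉ p.support := fun hm => hnb (aux_dist_split ht p hp hm)
        exact aux_reachable_induce p (fun v hv => show v ≠ u from fun heq => hu_not (heq ▸ hv)) hruS b.2
      have e1 : (G.induce S).connectedComponentMk ⟨r, hruS⟩ = c1 := by
        rw [SimpleGraph.ConnectedComponent.mem_supp_iff] at hb1s
        rw [← hb1s]
        exact SimpleGraph.ConnectedComponent.sound (hreach b1 hb1)
      have e2 : (G.induce S).connectedComponentMk ⟨r, hruS⟩ = c2 := by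
        rw [SimpleGraph.ConnectedComponent.mem_supp_iff] at hb2s
        rw [← hb2s]
        exact SimpleGraph.ConnectedComponent.sound (hreach b2 hb2)
      exact e1.symm.trans e2
    rcases Set.eq_empty_or_nonempty
        {c : (G.induce S).ConnectedComponent | 3 < c.supp.ncard} with he | ⟨c0, hc0⟩
    · rw [he]; simp
    · have hsub : {c : (G.induce S).ConnectedComponent | 3 < c.supp.ncard} ⊆ {c0} :=
        fun c hc => hss hc hc0
      exact le_trans (Set.ncard_le_ncard hsub (Set.finite_singleton _)) (by simp)
  · -- a component of order 2 or 3
    have hwS : w ∈ S := hwne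
    have hxS : x ∈ S := hxne
    refine ⟨(G.induce S).connectedComponentMk ⟨w, hwS⟩, ?_⟩
    have hxw' : (G.induce S).Adj ⟨x, hxS⟩ ⟨w, hwS⟩ := by
      simp only [SimpleGraph.comap_adj, Function.Embedding.coe_subtype]
      exact hxw
    have hmemw : (⟨w, hwS⟩ : ↥S) ∈
        ((G.induce S).connectedComponentMk ⟨w, hwS⟩).supp := by
      rw [SimpleGraph.ConnectedComponent.mem_supp_iff]
    have hmemx : (⟨x, hxS⟩ : ↥S) ∈
        ((G.induce S).connectedComponentMk ⟨w, hwS⟩).supp := by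
      rw [SimpleGraph.ConnectedComponent.mem_supp_iff]
      exact SimpleGraph.ConnectedComponent.sound hxw'.reachable
    have h2le : 2 ≤ ((G.induce S).connectedComponentMk ⟨w, hwS⟩).supp.ncard := by
      have hne' : (⟨x, hxS⟩ : ↥S) ≠ ⟨w, hwS⟩ := by
        intro h
        exact hxw.ne (congrArg Subtype.val h)
      have hpair : ({⟨x, hxS⟩, ⟨w, hwS⟩} : Set ↥S) ⊆
          ((G.induce S).connectedComponentMk ⟨w, hwS⟩).supp := by
        intro y hy
        rcases hy with rfl | hy
        · exact hmemx
        · rw [Set.mem_singleton_iff] at hy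
          rw [hy]
          exact hmemw
      have hpc : ({⟨x, hxS⟩, ⟨w, hwS⟩} : Set ↥S).ncard = 2 := Set.ncard_pair hne'
      rw [← hpc]
      exact Set.ncard_le_ncard hpair (Set.toFinite _)
    have h3 := hsmall _ ⟨w, hwS⟩ hmemw hbelw
    omega
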